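/- Let H be an inner product space, x_1,…,x_n ∈ H, and k ≥ 1 such that ‖x_i‖·‖x_j‖ ≤ k·Re⟨x_i, x_j⟩ for all 1 ≤ i < j ≤ n. Then ∑_{i=1}^n ‖x_i‖ ≤ √(nk/(n + k − 1)) · ‖∑_{i=1}^n x_i‖. -/

import Mathlib

theorem stmt_17 {𝕜 H : Type*} [RCLike 𝕜] [NormedAddCommGroup H] [InnerProductSpace 𝕜 H]
    (n : ℕ) (hn : 1 ≤ n) (x : ℕ → H) (k : ℝ) (hk : 1 ≤ k)
    (h : ∀ i ∈ Finset.Icc 1 n, ∀ j ∈ Finset.Icc 1 n, i < j →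
      ‖x i‖ * ‖x j‖ ≤ k * RCLike.re (inner 𝕜 (x i) (x j) : 𝕜)) :
    ∑ i ∈ Finset.Icc 1 n, ‖x i‖ ≤
      Real.sqrt ((n * k) / ((n : ℝ) + k - 1)) * ‖∑ i ∈ Finset.Icc 1 n, x i‖ := by
  set s := Finset.Icc 1 n with hs
  set S : ℝ := ∑ i ∈ s, ‖x i‖ with hSdef
  set Q : ℝ := ∑ i ∈ s, ‖x i‖ ^ 2 with hQdef
  set T : ℝ := ‖∑ i ∈ s, x i‖ ^ 2 with hTdef
  have hT : T = ∑ i ∈ s, ∑ j ∈ s, RCLike.re (inner 𝕜 (x i) (x j) : 𝕜) := by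
    rw [hTdef, ← @inner_self_eq_norm_sq 𝕜, sum_inner]
    rw [map_sum]
    refine Finset.sum_congr rfl fun i _ => ?_
    rw [inner_sum, map_sum]
  have hS2 : S ^ 2 = ∑ i ∈ s, ∑ j ∈ s, ‖x i‖ * ‖x j‖ := by
    rw [sq, hSdef, Finset.sum_mul_sum]
  have hoff : ∀ i ∈ s, ∀ j ∈ s, i ≠ j →
      ‖x i‖ * ‖x j‖ ≤ k * RCLike.re (inner 𝕜 (x i) (x j) : 𝕜) := by
    intro i hi j hj hij
    rcases lt_or_gt_of_ne hij with hlt | hgt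
    · exact h i hi j hj hlt
    · have := h j hj i hi hgt
      rw [mul_comm ‖x i‖]
      rwa [inner_re_symm] at this
  -- key: S^2 + (k-1)*Q ≤ k*T
  have key : S ^ 2 + (k - 1) * Q ≤ k * T := by
    have hL : S ^ 2 + (k - 1) * Q =
        ∑ i ∈ s, ∑ j ∈ s, (if i = j then k * ‖x i‖ ^ 2 else ‖x i‖ * ‖x j‖) := by
      have : ∀ i ∈ s, ∑ j ∈ s, (if i = j then k * ‖x i‖ ^ 2 else ‖x i‖ * ‖x j‖)
          = (∑ j ∈ s, ‖x i‖ * ‖x j‖) + (k - 1) * ‖x i‖ ^ 2 := by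
        intro i hi
        have : ∀ j ∈ s, (if i = j then k * ‖x i‖ ^ 2 else ‖x i‖ * ‖x j‖)
            = ‖x i‖ * ‖x j‖ + (if i = j then (k - 1) * ‖x i‖ ^ 2 else 0) := by
          intro j _
          by_cases hij : i = j
          · subst hij; simp [sq]; ring
          · simp [hij]
        rw [Finset.sum_congr rfl this, Finset.sum_add_distrib]
        congr 1
        simp only [Finset.sum_ite_eq, hi, if_true]
      rw [Finset.sum_congr rfl this, Finset.sum_add_distrib, ← hS2, ← Finset.mul_sum, ← hQdef]
    rw [hL, hT, Finset.mul_sum]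
    refine Finset.sum_le_sum fun i hi => ?_
    rw [Finset.mul_sum]
    refine Finset.sum_le_sum fun j hj => ?_
    by_cases hij : i = j
    · subst hij
      simp [inner_self_eq_norm_sq]
    · simpa [hij] using hoff i hi j hj hij
  have hcard : (s.card : ℝ) = n := by simp [hs]
  have hQS : S ^ 2 ≤ n * Q := by
    have := sq_sum_le_card_mul_sum_sq (s := s) (f := fun i => ‖x i‖)
    calc S ^ 2 ≤ (s.card : ℝ) * ∑ i ∈ s, ‖x i‖ ^ 2 := this
      _ = n * Q := by rw [hcard]
  have hk0 : (0 : ℝ) < (n : ℝ) + k - 1 := by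
    have : (1 : ℝ) ≤ (n : ℝ) := by exact_mod_cast hn
    linarith
  have hn0 : (0 : ℝ) < n := by
    have : (1 : ℝ) ≤ (n : ℝ) := by exact_mod_cast hn
    linarith
  have hmain : ((n : ℝ) + k - 1) * S ^ 2 ≤ n * k * T := by
    have h1 : (n : ℝ) * (S ^ 2 + (k - 1) * Q) ≤ n * (k * T) :=
      mul_le_mul_of_nonneg_left key (le_of_lt hn0)
    nlinarith [hQS, hk]
  have hS2le : S ^ 2 ≤ (n * k / ((n : ℝ) + k - 1)) * T := by
    rw [div_mul_eq_mul_div, le_div_iff₀ hk0, mul_comm (S ^ 2)]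
    exact hmain
  have hSnn : 0 ≤ S := Finset.sum_nonneg fun i _ => norm_nonneg _
  calc S = Real.sqrt (S ^ 2) := (Real.sqrt_sq hSnn).symm
    _ ≤ Real.sqrt ((n * k / ((n : ℝ) + k - 1)) * T) := Real.sqrt_le_sqrt hS2le
    _ = Real.sqrt (n * k / ((n : ℝ) + k - 1)) * Real.sqrt T := by
        rw [Real.sqrt_mul (by positivity)]
    _ = Real.sqrt (n * k / ((n : ℝ) + k - 1)) * ‖∑ i ∈ s, x i‖ := by
        rw [hTdef, Real.sqrt_sq (norm_nonneg _)]
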